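/- If λ_min := min(y₁/x₁, (y₁-y₂)/(x₂-x₁), (1-y₂)/(1-x₂)) ≤ 1, then the zipper map Z_p is not hypersensitive: for every C > 0 and β ∈ (0,1) there exists an interval A ⊂ [0,1] with |Z_p(A)| < C|A|^β. -/

import Mathlib

open Set MeasureTheory

/-- The zipper operator Φ_p acting on functions, defined piecewise. -/
noncomputable def zipperPhi (x₁ y₁ x₂ y₂ : ℝ) (f : ℝ → ℝ) : ℝ → ℝ := fun x =>
  if x ≤ x₁ then y₁ * f (x / x₁)
  else if x ≤ x₂ then y₁ - (y₁ - y₂) * f ((x - x₁) / (x₂ - x₁))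
  else y₂ + (1 - y₂) * f ((x - x₂) / (1 - x₂))

/-- Continuous maps f : [0,1] → [0,1] with f 0 = 0 and f 1 = 1. -/
def IsC00 (f : ℝ → ℝ) : Prop :=
  ContinuousOn f (Icc 0 1) ∧ MapsTo f (Icc 0 1) (Icc 0 1) ∧ f 0 = 0 ∧ f 1 = 1

/-- Iterating one contracting branch of the zipper structure. -/
lemma zipper_key (Z : ℝ → ℝ) (h v t s σ : ℝ) (hh : 0 < h) (ht : 0 ≤ t)
    (hth : t + h ≤ 1) (hv : 0 < v)
    (hmaps : MapsTo Z (Icc 0 1) (Icc 0 1))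
    (hσ : σ = v ∨ σ = -v)
    (hrec : ∀ x ∈ Icc (0:ℝ) 1, Z (t + h * x) = s + σ * Z x) :
    ∀ ℓ : ℕ, ∃ a b c : ℝ, 0 ≤ a ∧ a ≤ b ∧ b ≤ 1 ∧ b - a = h ^ ℓ ∧
      Z '' Icc a b ⊆ Icc c (c + v ^ ℓ) := by
  intro ℓ
  induction ℓ with
  | zero =>
    refine ⟨0, 1, 0, le_refl _, zero_le_one, le_refl _, by norm_num, ?_⟩
    intro y hy
    obtain ⟨u, hu, rfl⟩ := hy
    simpa using hmaps hu
  | succ n ih =>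
    obtain ⟨a, b, c, ha, hab, hb1, hba, him⟩ := ih
    have hmain : ∀ u ∈ Icc (t + h * a) (t + h * b),
        ∃ w ∈ Icc c (c + v ^ n), Z u = s + σ * w := by
      intro u hu
      set x := (u - t) / h with hxdef
      have hux : u = t + h * x := by
        rw [hxdef, mul_div_assoc', mul_div_cancel_left₀ _ hh.ne']; ring
      have hxab : x ∈ Icc a b := by
        constructor
        · rw [hxdef, le_div_iff₀ hh]; nlinarith [hu.1]
        · rw [hxdef, div_le_iff₀ hh]; nlinarith [hu.2]
      have hx01 : x ∈ Icc (0:ℝ) 1 := ⟨le_trans ha hxab.1, le_trans hxab.2 hb1⟩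
      exact ⟨Z x, him ⟨x, hxab, rfl⟩, by rw [hux]; exact hrec x hx01⟩
    rcases hσ with rfl | rfl
    · -- here σ plays the role of v (hv : 0 < σ)
      refine ⟨t + h * a, t + h * b, s + σ * c, by nlinarith, by nlinarith, by nlinarith,
        by rw [show t + h * b - (t + h * a) = h * (b - a) by ring, hba]; ring, ?_⟩
      rintro _ ⟨u, hu, rfl⟩
      obtain ⟨w, hw, hZu⟩ := hmain u hu
      rw [hZu]
      have h1 : σ * c ≤ σ * w := by nlinarith [hw.1]
      have h2 : σ * w ≤ σ * c + σ ^ (n + 1) := by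
        calc σ * w ≤ σ * (c + σ ^ n) := by nlinarith [hw.2]
          _ = σ * c + σ ^ (n + 1) := by ring
      exact ⟨by linarith, by linarith⟩
    · refine ⟨t + h * a, t + h * b, s - v * c - v ^ (n + 1), by nlinarith, by nlinarith,
        by nlinarith,
        by rw [show t + h * b - (t + h * a) = h * (b - a) by ring, hba]; ring, ?_⟩
      rintro _ ⟨u, hu, rfl⟩
      obtain ⟨w, hw, hZu⟩ := hmain u hu
      rw [hZu]
      have h1 : v * c ≤ v * w := by nlinarith [hw.1]
      have h2 : v * w ≤ v * c + v ^ (n + 1) := by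
        calc v * w ≤ v * (c + v ^ n) := by nlinarith [hw.2]
          _ = v * c + v ^ (n + 1) := by ring
      constructor
      · linarith [h2]
      · have : s + -v * w ≤ s - v * c := by linarith
        linarith

theorem zipper_not_hypersensitive (x₁ y₁ x₂ y₂ : ℝ)
    (hx₁ : x₁ ∈ Ioo (0:ℝ) 1) (hy₁ : y₁ ∈ Ioo (0:ℝ) 1)
    (hx₂ : x₂ ∈ Ioo (0:ℝ) 1) (hy₂ : y₂ ∈ Ioo (0:ℝ) 1)
    (hx : x₁ < x₂) (hy : y₂ < y₁)
    (hlam : min (y₁ / x₁) (min ((y₁ - y₂) / (x₂ - x₁)) ((1 - y₂) / (1 - x₂))) ≤ 1)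
    (Z : ℝ → ℝ) (hZ : IsC00 Z) (hfix : EqOn (zipperPhi x₁ y₁ x₂ y₂ Z) Z (Icc 0 1)) :
    ∀ C : ℝ, 0 < C → ∀ β ∈ Ioo (0:ℝ) 1,
      ∃ a b : ℝ, 0 ≤ a ∧ a ≤ b ∧ b ≤ 1 ∧
        (volume (Z '' Icc a b)).toReal < C * (b - a) ^ β := by
  obtain ⟨hZc, hZm, hZ0, hZ1⟩ := hZ
  obtain ⟨hx₁0, hx₁1⟩ := hx₁
  obtain ⟨hy₁0, hy₁1⟩ := hy₁
  obtain ⟨hx₂0, hx₂1⟩ := hx₂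
  obtain ⟨hy₂0, hy₂1⟩ := hy₂
  -- pick a branch with v ≤ h and extract the self-similarity data
  have hbranch : ∃ h v : ℝ, 0 < v ∧ v ≤ h ∧ h < 1 ∧
      ∀ ℓ : ℕ, ∃ a b c : ℝ, 0 ≤ a ∧ a ≤ b ∧ b ≤ 1 ∧ b - a = h ^ ℓ ∧
        Z '' Icc a b ⊆ Icc c (c + v ^ ℓ) := by
    rcases min_le_iff.mp hlam with h01 | h1
    · -- branch 0 : y₁ ≤ x₁
      have hvh : y₁ ≤ x₁ := (div_le_one hx₁0).mp h01
      refine ⟨x₁, y₁, hy₁0, hvh, hx₁1,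
        zipper_key Z x₁ y₁ 0 0 y₁ hx₁0 le_rfl (by linarith) hy₁0 hZm (Or.inl rfl) ?_⟩
      intro x hxm
      have hu : (0 : ℝ) + x₁ * x ∈ Icc (0:ℝ) 1 := by
        constructor
        · nlinarith [hxm.1]
        · nlinarith [hxm.2]
      have := (hfix hu).symm
      simp only [zipperPhi] at this
      rw [if_pos (by nlinarith [hxm.2] : (0:ℝ) + x₁ * x ≤ x₁)] at this
      rw [this]
      rw [show ((0:ℝ) + x₁ * x) / x₁ = x by field_simp; ring]
      ring
    rcases min_le_iff.mp h1 with h02 | h03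
    · -- branch 1 : y₁ - y₂ ≤ x₂ - x₁
      have hd : (0:ℝ) < x₂ - x₁ := by linarith
      have hvh : y₁ - y₂ ≤ x₂ - x₁ := (div_le_one hd).mp h02
      refine ⟨x₂ - x₁, y₁ - y₂, by linarith, hvh, by linarith,
        zipper_key Z (x₂ - x₁) (y₁ - y₂) x₁ y₁ (-(y₁ - y₂)) hd (le_of_lt hx₁0)
          (by linarith) (by linarith) hZm (Or.inr rfl) ?_⟩
      intro x hxm
      have hu : x₁ + (x₂ - x₁) * x ∈ Icc (0:ℝ) 1 := by
        constructor
        · nlinarith [hxm.1]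
        · nlinarith [hxm.2]
      have hthis := (hfix hu).symm
      simp only [zipperPhi] at hthis
      rcases eq_or_lt_of_le hxm.1 with h0 | h0
      · -- x = 0
        rw [← h0]
        rw [← h0] at hthis
        rw [if_pos (by linarith : x₁ + (x₂ - x₁) * 0 ≤ x₁)] at hthis
        rw [hthis]
        rw [show (x₁ + (x₂ - x₁) * 0) / x₁ = 1 by field_simp; ring]
        rw [hZ1, hZ0]
        ring
      · rw [if_neg (by nlinarith : ¬ x₁ + (x₂ - x₁) * x ≤ x₁),
          if_pos (by nlinarith [hxm.2] : x₁ + (x₂ - x₁) * x ≤ x₂)] at hthis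
        rw [hthis]
        rw [show (x₁ + (x₂ - x₁) * x - x₁) / (x₂ - x₁) = x by field_simp; ring]
        ring
    · -- branch 2 : 1 - y₂ ≤ 1 - x₂
      have hd : (0:ℝ) < 1 - x₂ := by linarith
      have hvh : 1 - y₂ ≤ 1 - x₂ := (div_le_one hd).mp h03
      refine ⟨1 - x₂, 1 - y₂, by linarith, hvh, by linarith,
        zipper_key Z (1 - x₂) (1 - y₂) x₂ y₂ (1 - y₂) hd (le_of_lt hx₂0)
          (by linarith) (by linarith) hZm (Or.inl rfl) ?_⟩
      intro x hxm
      have hu : x₂ + (1 - x₂) * x ∈ Icc (0:ℝ) 1 := by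
        constructor
        · nlinarith [hxm.1]
        · nlinarith [hxm.2]
      have hthis := (hfix hu).symm
      simp only [zipperPhi] at hthis
      rcases eq_or_lt_of_le hxm.1 with h0 | h0
      · rw [← h0]
        rw [← h0] at hthis
        rw [if_neg (by nlinarith : ¬ x₂ + (1 - x₂) * 0 ≤ x₁),
          if_pos (by linarith : x₂ + (1 - x₂) * 0 ≤ x₂)] at hthis
        rw [hthis]
        rw [show (x₂ + (1 - x₂) * 0 - x₁) / (x₂ - x₁) = 1 by
          rw [show x₂ + (1 - x₂) * 0 - x₁ = x₂ - x₁ by ring]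
          exact div_self (ne_of_gt (by linarith))]
        rw [hZ1, hZ0]
        ring
      · rw [if_neg (by nlinarith : ¬ x₂ + (1 - x₂) * x ≤ x₁),
          if_neg (by nlinarith : ¬ x₂ + (1 - x₂) * x ≤ x₂)] at hthis
        rw [hthis]
        rw [show (x₂ + (1 - x₂) * x - x₂) / (1 - x₂) = x by field_simp; ring]
  obtain ⟨h, v, hv0, hvh, hh1, hfun⟩ := hbranch
  have hh0 : (0:ℝ) < h := lt_of_lt_of_le hv0 hvh
  intro C hC β hβ
  obtain ⟨hβ0, hβ1⟩ := hβ
  have hr0 : (0:ℝ) < h ^ (1 - β) := Real.rpow_pos_of_pos hh0 _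
  have hr1 : h ^ (1 - β) < 1 := Real.rpow_lt_one hh0.le hh1 (by linarith)
  obtain ⟨ℓ, hℓ⟩ := exists_pow_lt_of_lt_one hC hr1
  obtain ⟨a, b, c, ha, hab, hb1, hba, him⟩ := hfun ℓ
  refine ⟨a, b, ha, hab, hb1, ?_⟩
  have hvol : (volume (Z '' Icc a b)).toReal ≤ v ^ ℓ := by
    have h1 : volume (Z '' Icc a b) ≤ volume (Icc c (c + v ^ ℓ)) := measure_mono him
    have h2 : volume (Icc c (c + v ^ ℓ)) = ENNReal.ofReal (v ^ ℓ) := by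
      rw [Real.volume_Icc]; congr 1; ring
    rw [h2] at h1
    calc (volume (Z '' Icc a b)).toReal
        ≤ (ENNReal.ofReal (v ^ ℓ)).toReal := ENNReal.toReal_mono ENNReal.ofReal_ne_top h1
      _ = v ^ ℓ := ENNReal.toReal_ofReal (by positivity)
  have hsplit : (h : ℝ) ^ ℓ = (h ^ ℓ) ^ β * (h ^ (1 - β)) ^ ℓ := by
    rw [← Real.rpow_natCast h ℓ, ← Real.rpow_natCast (h ^ (1 - β)) ℓ,
      ← Real.rpow_mul hh0.le, ← Real.rpow_mul hh0.le, ← Real.rpow_add hh0]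
    congr 1
    ring
  have hpos : (0:ℝ) < (h ^ ℓ) ^ β := by
    apply Real.rpow_pos_of_pos
    positivity
  have hlast : (h : ℝ) ^ ℓ < C * (h ^ ℓ) ^ β := by
    calc (h : ℝ) ^ ℓ = (h ^ ℓ) ^ β * (h ^ (1 - β)) ^ ℓ := hsplit
      _ < (h ^ ℓ) ^ β * C := mul_lt_mul_of_pos_left hℓ hpos
      _ = C * (h ^ ℓ) ^ β := by ring
  have hvℓ : v ^ ℓ ≤ h ^ ℓ := pow_le_pow_left₀ hv0.le hvh ℓ
  rw [hba]
  linarith
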